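/- Let α > 0 with 10α ≤ c. Suppose c ≥ 2, m ≥ n + c + 2, n ≥ 20, and n ≤ 10αm/c − 1. Then Pr[|I₁ ∩ B_New^π| ≥ 2] = Pr[|J₁ ∩ S_New^π| ≥ 2] ≥ (c²/12800)·(n²/m²)·(1 − 10α/c)^c, where Pr is over a uniformly random valid assignment π. -/

import Mathlib

open Finset

/-- Labels for agents: old buyer, new buyer, old seller, new seller. -/
inductive Label : Type
  | BO | BN | SO | SN
deriving DecidableEq

instance : Fintype Label :=
  ⟨{.BO, .BN, .SO, .SN}, fun x => by cases x <;> simp⟩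

/-- Total number of agents: `m` old buyers, `n` old sellers, `c` new buyers and `c` new
sellers. -/
def NN (m n c : ℕ) : ℕ := m + n + 2 * c

/-- The set of indices carrying a given label under the assignment `π`. -/
def labelSet (m n c : ℕ) (L : Label) (π : Fin (NN m n c) → Label) :
    Finset (Fin (NN m n c)) :=
  Finset.univ.filter (fun i => π i = L)

/-- Valid assignments: exactly `m` old buyers, `c` new buyers, `n` old sellers and
`c` new sellers. -/
def validAssignments (m n c : ℕ) : Finset (Fin (NN m n c) → Label) :=
  Finset.univ.filter (fun π =>
    (labelSet m n c .BO π).card = m ∧ (labelSet m n c .BN π).card = c ∧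
    (labelSet m n c .SO π).card = n ∧ (labelSet m n c .SN π).card = c)

/-- `p = ⌈n/10⌉`. -/
def pVal (n : ℕ) : ℕ := (n + 9) / 10

/-- `I₁`: the indices of the top `p` quantiles (1-based indices `{1,…,p}`). -/
def I1 (m n c : ℕ) : Finset (Fin (NN m n c)) :=
  Finset.univ.filter (fun i => (i : ℕ) < pVal n)

/-- `I₂`: 1-based indices `{p+1,…,2p}`. -/
def I2 (m n c : ℕ) : Finset (Fin (NN m n c)) :=
  Finset.univ.filter (fun i => pVal n ≤ (i : ℕ) ∧ (i : ℕ) < 2 * pVal n)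

/-- `J₁`: 1-based indices `{N-p+1,…,N}`. -/
def J1 (m n c : ℕ) : Finset (Fin (NN m n c)) :=
  Finset.univ.filter (fun i => NN m n c - pVal n ≤ (i : ℕ))

/-- `J₂`: 1-based indices `{N-2p+1,…,N-p}`. -/
def J2 (m n c : ℕ) : Finset (Fin (NN m n c)) :=
  Finset.univ.filter (fun i =>
    NN m n c - 2 * pVal n ≤ (i : ℕ) ∧ (i : ℕ) < NN m n c - pVal n)

/-- The good event `E₁`: at least 2 new buyers in `I₁`, at least 1 old buyer in `I₂`,
at least 2 new sellers in `J₁`, at least 1 old seller in `J₂`. -/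
def E1 (m n c : ℕ) : Finset (Fin (NN m n c) → Label) :=
  (validAssignments m n c).filter (fun π =>
    2 ≤ (I1 m n c ∩ labelSet m n c .BN π).card ∧
    1 ≤ (I2 m n c ∩ labelSet m n c .BO π).card ∧
    2 ≤ (J1 m n c ∩ labelSet m n c .SN π).card ∧
    1 ≤ (J2 m n c ∩ labelSet m n c .SO π).card)

/-- The bad event `E₂`: `E₁` fails and all new sellers are among the top `2n + 2c`
indices. -/
def E2 (m n c : ℕ) : Finset (Fin (NN m n c) → Label) :=
  (validAssignments m n c).filter (fun π =>
    π ∉ E1 m n c ∧ ∀ i ∈ labelSet m n c .SN π, (i : ℕ) < 2 * n + 2 * c)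

/-- The probability of an event under a uniformly random valid assignment. -/
noncomputable def prOf (m n c : ℕ) (E : Finset (Fin (NN m n c) → Label)) : ℝ :=
  (E.card : ℝ) / (validAssignments m n c).card

section
variable {α : Type*} [Fintype α] [DecidableEq α]

-- existence of a permutation mapping S onto S'
lemma exists_perm_map (S S' : Finset α) (h : S.card = S'.card) :
    ∃ e : Equiv.Perm α, S.map e.toEmbedding = S' := by
  classical
  have e0 : {x // x ∈ S} ≃ {x // x ∈ S'} := Finset.equivOfCardEq h
  refine ⟨e0.extendSubtype, ?_⟩
  apply Finset.eq_of_subset_of_card_le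
  · intro x hx
    rw [Finset.mem_map] at hx
    obtain ⟨y, hy, rfl⟩ := hx
    exact e0.extendSubtype_mem y hy
  · rw [Finset.card_map, h]

end






lemma labelSet_comp_equiv (m n c : ℕ) (L : Label) (π : Fin (NN m n c) → Label)
    (e : Equiv.Perm (Fin (NN m n c))) :
    labelSet m n c L (π ∘ e) = (labelSet m n c L π).map e.symm.toEmbedding := by
  ext i
  simp [labelSet, Finset.mem_map_equiv]

lemma valid_comp_equiv {m n c : ℕ} {π : Fin (NN m n c) → Label}
    (e : Equiv.Perm (Fin (NN m n c)))
    (h : π ∈ validAssignments m n c) : (π ∘ e) ∈ validAssignments m n c := by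
  simp only [validAssignments, mem_filter, mem_univ, true_and] at h ⊢
  simp only [labelSet_comp_equiv, Finset.card_map]
  exact h

def fib (m n c : ℕ) (S : Finset (Fin (NN m n c))) : Finset (Fin (NN m n c) → Label) :=
  (validAssignments m n c).filter (fun π => labelSet m n c .SN π = S)

lemma fib_card_const {m n c : ℕ} {S S' : Finset (Fin (NN m n c))} (h : S.card = S'.card) :
    (fib m n c S).card = (fib m n c S').card := by
  classical
  obtain ⟨e, he⟩ := exists_perm_map S S' h
  have hback : S'.map e.symm.toEmbedding = S := by
    rw [← he, Finset.map_map]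
    have : (e.toEmbedding.trans e.symm.toEmbedding) = Function.Embedding.refl _ := by
      ext x; simp
    rw [this, Finset.map_refl]
  refine Finset.card_bij' (fun π _ => π ∘ e.symm) (fun π _ => π ∘ e) ?_ ?_ ?_ ?_
  · intro π hπ
    simp only [fib, mem_filter] at hπ ⊢
    refine ⟨valid_comp_equiv e.symm hπ.1, ?_⟩
    rw [labelSet_comp_equiv, hπ.2, Equiv.symm_symm, he]
  · intro π hπ
    simp only [fib, mem_filter] at hπ ⊢
    refine ⟨valid_comp_equiv e hπ.1, ?_⟩
    rw [labelSet_comp_equiv, hπ.2, hback]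
  · intro π _
    funext i; simp
  · intro π _
    funext i; simp

lemma fib_nonempty {m n c : ℕ} {S : Finset (Fin (NN m n c))} (hS : S.card = c) :
    0 < (fib m n c S).card := by
  classical
  have hNcard : Fintype.card (Fin (NN m n c)) = m + n + 2 * c := by
    rw [Fintype.card_fin]; rfl
  have hScomp : Sᶜ.card = m + n + c := by
    rw [Finset.card_compl, hS, hNcard]; omega
  obtain ⟨T1, hT1sub, hT1⟩ : ∃ T1 ⊆ Sᶜ, T1.card = m :=
    Finset.exists_subset_card_eq (by omega)
  have hd1 : (Sᶜ \ T1).card = n + c := by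
    rw [Finset.card_sdiff_of_subset hT1sub, hScomp, hT1]; omega
  obtain ⟨T2, hT2sub, hT2⟩ : ∃ T2 ⊆ Sᶜ \ T1, T2.card = c :=
    Finset.exists_subset_card_eq (by omega)
  set π : Fin (NN m n c) → Label := fun i =>
    if i ∈ S then .SN else if i ∈ T1 then .BO else if i ∈ T2 then .BN else .SO with hπ
  have memS : ∀ i, i ∈ S → π i = .SN := by intro i h; simp [hπ, h]
  have memT1 : ∀ i, i ∈ T1 → π i = .BO := by
    intro i h
    have : i ∉ S := by have := hT1sub h; simpa using this
    simp [hπ, h, this]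
  have memT2 : ∀ i, i ∈ T2 → π i = .BN := by
    intro i h
    have h2 := hT2sub h
    rw [Finset.mem_sdiff, Finset.mem_compl] at h2
    simp [hπ, h2.1, h2.2, h]
  have hSN : labelSet m n c .SN π = S := by
    ext i
    simp only [labelSet, mem_filter, mem_univ, true_and]
    constructor
    · intro h
      by_contra hiS
      by_cases h1 : i ∈ T1
      · rw [memT1 i h1] at h; exact absurd h (by simp)
      · by_cases h2 : i ∈ T2
        · rw [memT2 i h2] at h; exact absurd h (by simp)
        · simp [hπ, hiS, h1, h2] at h
    · exact memS i
  have hBO : labelSet m n c .BO π = T1 := by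
    ext i
    simp only [labelSet, mem_filter, mem_univ, true_and]
    constructor
    · intro h
      by_contra h1
      by_cases hiS : i ∈ S
      · rw [memS i hiS] at h; exact absurd h (by simp)
      · by_cases h2 : i ∈ T2
        · rw [memT2 i h2] at h; exact absurd h (by simp)
        · simp [hπ, hiS, h1, h2] at h
    · exact memT1 i
  have hBN : labelSet m n c .BN π = T2 := by
    ext i
    simp only [labelSet, mem_filter, mem_univ, true_and]
    constructor
    · intro h
      by_contra h2
      by_cases hiS : i ∈ S
      · rw [memS i hiS] at h; exact absurd h (by simp)
      · by_cases h1 : i ∈ T1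
        · rw [memT1 i h1] at h; exact absurd h (by simp)
        · simp [hπ, hiS, h1, h2] at h
    · exact memT2 i
  have hSO : labelSet m n c .SO π = (Sᶜ \ T1) \ T2 := by
    ext i
    simp only [labelSet, mem_filter, mem_univ, true_and, Finset.mem_sdiff,
      Finset.mem_compl]
    constructor
    · intro h
      refine ⟨⟨?_, ?_⟩, ?_⟩
      · intro hiS; rw [memS i hiS] at h; exact absurd h (by simp)
      · intro h1; rw [memT1 i h1] at h; exact absurd h (by simp)
      · intro h2; rw [memT2 i h2] at h; exact absurd h (by simp)
    · rintro ⟨⟨hiS, h1⟩, h2⟩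
      simp [hπ, hiS, h1, h2]
  have hSOcard : ((Sᶜ \ T1) \ T2).card = n := by
    rw [Finset.card_sdiff_of_subset hT2sub, hd1, hT2]; omega
  rw [Finset.card_pos]
  refine ⟨π, ?_⟩
  simp only [fib, mem_filter, validAssignments, mem_univ, true_and]
  exact ⟨⟨by rw [hBO, hT1], by rw [hBN, hT2], by rw [hSO, hSOcard], by rw [hSN, hS]⟩, hSN⟩

lemma card_filter_SN {m n c : ℕ} (P : Finset (Fin (NN m n c)) → Prop) [DecidablePred P]
    {S₀ : Finset (Fin (NN m n c))} (h₀ : S₀.card = c) :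
    ((validAssignments m n c).filter (fun π => P (labelSet m n c .SN π))).card
      = ((Finset.powersetCard c (univ : Finset (Fin (NN m n c)))).filter P).card
          * (fib m n c S₀).card := by
  classical
  rw [Finset.card_eq_sum_card_fiberwise
    (f := fun π => labelSet m n c .SN π)
    (t := (Finset.powersetCard c (univ : Finset (Fin (NN m n c)))).filter P)
    (fun π hπ => by
      rw [Finset.mem_coe, mem_filter] at hπ
      rw [Finset.mem_coe, mem_filter, Finset.mem_powersetCard]
      have hv := hπ.1
      simp only [validAssignments, mem_filter, mem_univ, true_and] at hv
      exact ⟨⟨Finset.subset_univ _, hv.2.2.2⟩, hπ.2⟩)]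
  rw [Finset.sum_congr rfl (fun S hS => ?_), Finset.sum_const, smul_eq_mul]
  rw [mem_filter, Finset.mem_powersetCard] at hS
  have : ((validAssignments m n c).filter (fun π => P (labelSet m n c .SN π))).filter
      (fun π => labelSet m n c .SN π = S) = fib m n c S := by
    rw [Finset.filter_filter, fib]
    apply Finset.filter_congr
    intro π _
    constructor
    · rintro ⟨_, h⟩; exact h
    · intro h; exact ⟨by rw [h]; exact hS.2, h⟩
  rw [this]
  exact fib_card_const (by rw [hS.1.2, h₀])

lemma card_valid_eq {m n c : ℕ} {S₀ : Finset (Fin (NN m n c))} (h₀ : S₀.card = c) :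
    (validAssignments m n c).card = (NN m n c).choose c * (fib m n c S₀).card := by
  classical
  have := card_filter_SN (m := m) (n := n) (c := c) (fun _ => True) h₀
  simpa [Finset.card_powersetCard] using this



lemma J1_card {m n c : ℕ} (hp : pVal n ≤ NN m n c) :
    (J1 m n c).card = pVal n := by
  classical
  have : (J1 m n c).card = (Finset.Ico (NN m n c - pVal n) (NN m n c)).card := by
    refine Finset.card_bij (fun (i : Fin (NN m n c)) (_ : i ∈ J1 m n c) => (i : ℕ)) ?_ ?_ ?_
    · intro i hi
      rw [J1, mem_filter] at hi
      exact Finset.mem_Ico.2 ⟨hi.2, i.isLt⟩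
    · intro a ha b hb h
      exact Fin.val_injective h
    · intro a ha
      rw [Finset.mem_Ico] at ha
      exact ⟨⟨a, ha.2⟩, by rw [J1, mem_filter]; exact ⟨mem_univ _, ha.1⟩, rfl⟩
  rw [this, Nat.card_Ico]
  omega

lemma good_count {m n c : ℕ} (hp : pVal n ≤ NN m n c) (hc2 : 2 ≤ c) :
    (pVal n).choose 2 * ((NN m n c) - pVal n).choose (c - 2)
      ≤ (((Finset.powersetCard c (univ : Finset (Fin (NN m n c)))).filter
          (fun S => 2 ≤ ((J1 m n c) ∩ S).card)).card) := by
  classical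
  have hJc : (J1 m n c)ᶜ.card = NN m n c - pVal n := by
    rw [Finset.card_compl, J1_card hp]
    rw [Fintype.card_fin]
  have key : ((Finset.powersetCard 2 (J1 m n c)) ×ˢ
      (Finset.powersetCard (c - 2) (J1 m n c)ᶜ)).card
      ≤ (((Finset.powersetCard c (univ : Finset (Fin (NN m n c)))).filter
          (fun S => 2 ≤ ((J1 m n c) ∩ S).card)).card) := by
    apply Finset.card_le_card_of_injOn (fun q => q.1 ∪ q.2)
    · rintro ⟨A, B⟩ hq
      rw [Finset.mem_coe, Finset.mem_product] at hq
      obtain ⟨hA, hB⟩ := hq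
      rw [Finset.mem_powersetCard] at hA hB
      have hdisj : Disjoint A B :=
        Finset.disjoint_left.2 fun x hxA hxB => by
          have h1 := hA.1 hxA
          have h2 := hB.1 hxB
          rw [Finset.mem_compl] at h2
          exact h2 h1
      rw [Finset.mem_coe, mem_filter, Finset.mem_powersetCard]
      refine ⟨⟨Finset.subset_univ _, ?_⟩, ?_⟩
      · rw [Finset.card_union_of_disjoint hdisj, hA.2, hB.2]; omega
      · calc 2 = A.card := hA.2.symm
          _ ≤ ((J1 m n c) ∩ (A ∪ B)).card := by
              apply Finset.card_le_card
              intro x hx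
              exact Finset.mem_inter.2 ⟨hA.1 hx, Finset.mem_union_left _ hx⟩
    · rintro ⟨A1, B1⟩ h1 ⟨A2, B2⟩ h2 heq
      simp only [Set.mem_setOf_eq, Finset.coe_product, Set.mem_prod,
        Finset.mem_coe, Finset.mem_powersetCard] at h1 h2
      simp only at heq
      have hval : ∀ (A B : Finset (Fin (NN m n c))), A ⊆ J1 m n c → B ⊆ (J1 m n c)ᶜ →
          (A ∪ B) ∩ J1 m n c = A ∧ (A ∪ B) ∩ (J1 m n c)ᶜ = B := by
        intro A B hA hB
        constructor
        · apply Finset.Subset.antisymm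
          · intro x hx
            rw [Finset.mem_inter, Finset.mem_union] at hx
            rcases hx.1 with h | h
            · exact h
            · exact absurd hx.2 (by have := hB h; rwa [Finset.mem_compl] at this)
          · intro x hx
            exact Finset.mem_inter.2 ⟨Finset.mem_union_left _ hx, hA hx⟩
        · apply Finset.Subset.antisymm
          · intro x hx
            rw [Finset.mem_inter, Finset.mem_union] at hx
            rcases hx.1 with h | h
            · exact absurd (hA h) (by have := hx.2; rwa [Finset.mem_compl] at this)
            · exact h
          · intro x hx
            exact Finset.mem_inter.2 ⟨Finset.mem_union_right _ hx, hB hx⟩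
      obtain ⟨hA1, hB1⟩ := hval A1 B1 h1.1.1 h1.2.1
      obtain ⟨hA2, hB2⟩ := hval A2 B2 h2.1.1 h2.2.1
      have : A1 = A2 := by rw [← hA1, ← hA2, heq]
      have hB : B1 = B2 := by rw [← hB1, ← hB2, heq]
      exact Prod.ext this hB
  calc (pVal n).choose 2 * ((NN m n c) - pVal n).choose (c - 2)
      = ((Finset.powersetCard 2 (J1 m n c)) ×ˢ
          (Finset.powersetCard (c - 2) (J1 m n c)ᶜ)).card := by
        rw [Finset.card_product, Finset.card_powersetCard, Finset.card_powersetCard,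
          J1_card hp, hJc]
    _ ≤ _ := key

def tau : Label → Label
  | .BN => .SN
  | .SN => .BN
  | .BO => .BO
  | .SO => .SO

lemma tau_eq_iff (a L : Label) : tau a = L ↔ a = tau L := by
  cases a <;> cases L <;> simp [tau]

lemma labelSet_Phi (m n c : ℕ) (L : Label) (π : Fin (NN m n c) → Label) :
    labelSet m n c L (fun i => tau (π (Fin.rev i)))
      = (labelSet m n c (tau L) π).map Fin.revPerm.toEmbedding := by
  ext i
  simp only [labelSet, mem_filter, mem_univ, true_and, Finset.mem_map_equiv,
    Fin.revPerm_symm]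
  rw [tau_eq_iff]
  rfl

lemma rev_mem_iff {m n c : ℕ} (hp1 : 1 ≤ pVal n) (i : Fin (NN m n c)) :
    (NN m n c - pVal n ≤ (i : ℕ)) ↔ ((Fin.rev i : Fin (NN m n c)) : ℕ) < pVal n := by
  have h1 : (i : ℕ) < NN m n c := i.isLt
  have h2 : ((Fin.rev i : Fin (NN m n c)) : ℕ) = NN m n c - ((i : ℕ) + 1) := Fin.val_rev i
  omega

lemma J1_inter_map {m n c : ℕ} (hp1 : 1 ≤ pVal n) (S : Finset (Fin (NN m n c))) :
    J1 m n c ∩ S.map Fin.revPerm.toEmbedding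
      = (I1 m n c ∩ S).map Fin.revPerm.toEmbedding := by
  ext i
  simp only [Finset.mem_inter, Finset.mem_map_equiv, Fin.revPerm_symm, J1, I1,
    mem_filter, mem_univ, true_and]
  have : Fin.revPerm i = Fin.rev i := rfl
  rw [this, rev_mem_iff hp1 i]

lemma I1_inter_map {m n c : ℕ} (hp1 : 1 ≤ pVal n) (S : Finset (Fin (NN m n c))) :
    I1 m n c ∩ S.map Fin.revPerm.toEmbedding
      = (J1 m n c ∩ S).map Fin.revPerm.toEmbedding := by
  ext i
  simp only [Finset.mem_inter, Finset.mem_map_equiv, Fin.revPerm_symm, J1, I1,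
    mem_filter, mem_univ, true_and]
  have h : Fin.revPerm i = Fin.rev i := rfl
  rw [h]
  have := rev_mem_iff (m := m) (c := c) hp1 (Fin.rev i)
  rw [Fin.rev_rev] at this
  rw [← this]

lemma valid_Phi {m n c : ℕ} {π : Fin (NN m n c) → Label}
    (h : π ∈ validAssignments m n c) :
    (fun i => tau (π (Fin.rev i))) ∈ validAssignments m n c := by
  simp only [validAssignments, mem_filter, mem_univ, true_and] at h ⊢
  rw [labelSet_Phi, labelSet_Phi, labelSet_Phi, labelSet_Phi]
  simp only [Finset.card_map]
  exact ⟨h.1, h.2.2.2, h.2.2.1, h.2.1⟩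

lemma card_sym {m n c : ℕ} (hp1 : 1 ≤ pVal n) :
    ((validAssignments m n c).filter
        (fun π => 2 ≤ (I1 m n c ∩ labelSet m n c .BN π).card)).card =
      ((validAssignments m n c).filter
        (fun π => 2 ≤ (J1 m n c ∩ labelSet m n c .SN π).card)).card := by
  classical
  have hinv : ∀ π : Fin (NN m n c) → Label,
      (fun i => tau ((fun j => tau (π (Fin.rev j))) (Fin.rev i))) = π := by
    intro π
    funext i
    simp only [Fin.rev_rev]
    cases π i <;> rfl
  refine Finset.card_bij' (fun π _ => fun i => tau (π (Fin.rev i)))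
    (fun π _ => fun i => tau (π (Fin.rev i))) ?_ ?_ ?_ ?_
  · intro π hπ
    rw [mem_filter] at hπ ⊢
    refine ⟨valid_Phi hπ.1, ?_⟩
    rw [labelSet_Phi]
    have : tau Label.SN = Label.BN := rfl
    rw [this, J1_inter_map hp1, Finset.card_map]
    exact hπ.2
  · intro π hπ
    rw [mem_filter] at hπ ⊢
    refine ⟨valid_Phi hπ.1, ?_⟩
    rw [labelSet_Phi]
    have : tau Label.BN = Label.SN := rfl
    rw [this, I1_inter_map hp1, Finset.card_map]
    exact hπ.2
  · intro π _; exact hinv π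
  · intro π _; exact hinv π

lemma key_real (m n c : ℕ) (α : ℝ) (hα : 0 < α) (hαc : 10 * α ≤ (c : ℝ))
    (hc : 2 ≤ c) (hm : n + c + 2 ≤ m) (hn20 : 20 ≤ n)
    (hn : (n : ℝ) ≤ 10 * α * (m : ℝ) / (c : ℝ) - 1) :
    ((c : ℝ) ^ 2 / 12800) * ((n : ℝ) ^ 2 / (m : ℝ) ^ 2) * (1 - 10 * α / (c : ℝ)) ^ c
      ≤ (((pVal n).choose 2 * ((NN m n c - pVal n).choose (c - 2)) : ℕ) : ℝ)
          / (((NN m n c).choose c : ℕ) : ℝ) := by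
  obtain ⟨k, rfl⟩ : ∃ k, c = k + 2 := ⟨c - 2, by omega⟩
  set N := NN m n (k + 2) with hNdef
  set p := pVal n with hpdef
  have hNval : N = m + n + 2 * (k + 2) := rfl
  have hpval : p = (n + 9) / 10 := rfl
  have hk2 : k + 2 - 2 = k := by omega
  rw [hk2]
  -- basic nat facts
  have hp2 : 2 ≤ p := by omega
  have hpn : p ≤ n := by omega
  have hn10 : n ≤ 10 * p := by omega
  have hn20p : n ≤ 20 * (p - 1) := by omega
  have hNm : N ≤ 4 * m := by omega
  have hcN : k + 2 ≤ N := by omega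
  have hm0 : 0 < m := by omega
  have hN1 : 1 ≤ N := by omega
  -- real t
  set t : ℝ := 10 * α / ((k : ℝ) + 2) with htdef
  have hcast : ((k + 2 : ℕ) : ℝ) = (k : ℝ) + 2 := by push_cast; ring
  have hcR : (0 : ℝ) < (k : ℝ) + 2 := by positivity
  have ht0 : 0 ≤ t := by positivity
  have ht1 : t ≤ 1 := by
    rw [htdef, div_le_one hcR]
    calc 10 * α ≤ ((k + 2 : ℕ) : ℝ) := hαc
      _ = (k : ℝ) + 2 := hcast
  have htm : (n : ℝ) + 1 ≤ t * m := by
    have h1 : 10 * α * (m : ℝ) / ((k + 2 : ℕ) : ℝ) = t * m := by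
      rw [hcast, htdef]; ring
    rw [h1] at hn
    linarith
  -- nat products
  set An : ℕ := ∏ j ∈ Finset.range k, (N - p - j) with hAn
  set Bn : ℕ := ∏ j ∈ Finset.range k, (N - 2 - j) with hBn
  have hdesc : N.descFactorial (k + 2) = N * (N - 1) * Bn := by
    rw [Nat.descFactorial_eq_prod_range]
    rw [show k + 2 = 2 + k by omega, Finset.prod_range_add]
    congr 1
    · rw [Finset.prod_range_succ, Finset.prod_range_one, Nat.sub_zero]
    · apply Finset.prod_congr rfl
      intro j _
      omega
  have hdescA : (N - p).descFactorial k = An := by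
    rw [Nat.descFactorial_eq_prod_range]
  -- product inequality
  have hprod : (1 - t) ^ k * (Bn : ℝ) ≤ (An : ℝ) := by
    rw [hAn, hBn]
    push_cast [Nat.cast_prod]
    have hpc : (1 - t) ^ k = ∏ _j ∈ Finset.range k, (1 - t) := by
      rw [Finset.prod_const, Finset.card_range]
    rw [hpc, ← Finset.prod_mul_distrib]
    apply Finset.prod_le_prod
    · intro j _
      exact mul_nonneg (by linarith) (Nat.cast_nonneg _)
    · intro j hj
      rw [Finset.mem_range] at hj
      have hj3 : j ≤ k - 1 := by omega
      have e1 : ((N - 2 - j : ℕ) : ℝ) = (N : ℝ) - 2 - (j : ℝ) := by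
        have : (N - 2 - j : ℕ) = N - (2 + j) := by omega
        rw [this, Nat.cast_sub (by omega)]
        push_cast; ring
      have e2 : ((N - p - j : ℕ) : ℝ) = (N : ℝ) - (p : ℝ) - (j : ℝ) := by
        have : (N - p - j : ℕ) = N - (p + j) := by omega
        rw [this, Nat.cast_sub (by omega)]
        push_cast; ring
      rw [e1, e2]
      have hmX : (m : ℝ) ≤ (N : ℝ) - 2 - (j : ℝ) := by
        have h1 : (m : ℕ) + 2 + j ≤ N := by omega
        have := Nat.cast_le (α := ℝ).2 h1
        push_cast at this
        linarith
      have h5 : t * (m : ℝ) ≤ t * ((N : ℝ) - 2 - (j : ℝ)) :=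
        mul_le_mul_of_nonneg_left hmX ht0
      have h6 : (p : ℝ) ≤ (n : ℝ) + 1 := by
        have := Nat.cast_le (α := ℝ).2 hpn
        linarith
      nlinarith
  have hpow : (1 - t) ^ (k + 2) ≤ (1 - t) ^ k :=
    pow_le_pow_of_le_one (by linarith) (by linarith) (by omega)
  -- core polynomial inequality
  have hnat : 2 * (((k+2) * (k+2)) * ((n * n) * (N * (N - 1))))
      ≤ 12800 * ((m * m) * ((p * (p - 1)) * ((k + 2) * (k + 1)))) := by
    have e3 : (k+2) * (k+2) ≤ (k+2) * (2 * (k+1)) := Nat.mul_le_mul_left _ (by omega)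
    have e1 : n * n ≤ (10 * p) * (20 * (p - 1)) := Nat.mul_le_mul hn10 hn20p
    have e2 : N * (N - 1) ≤ (4 * m) * (4 * m) :=
      Nat.mul_le_mul hNm (le_trans (Nat.sub_le _ _) hNm)
    calc 2 * (((k+2) * (k+2)) * ((n * n) * (N * (N - 1))))
        ≤ 2 * (((k+2) * (2 * (k+1))) * (((10 * p) * (20 * (p - 1))) * ((4 * m) * (4 * m)))) := by
          exact Nat.mul_le_mul_left _ (Nat.mul_le_mul e3 (Nat.mul_le_mul e1 e2))
      _ = 12800 * ((m * m) * ((p * (p - 1)) * ((k + 2) * (k + 1)))) := by ring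
  have hN1R : ((N - 1 : ℕ) : ℝ) = (N : ℝ) - 1 := by
    rw [Nat.cast_sub hN1]; norm_num
  have hp1R : ((p - 1 : ℕ) : ℝ) = (p : ℝ) - 1 := by
    rw [Nat.cast_sub (by omega)]; norm_num
  have hnatR : 2 * ((((k:ℝ)+2) * ((k:ℝ)+2)) * (((n:ℝ) * n) * ((N:ℝ) * ((N:ℝ) - 1))))
      ≤ 12800 * (((m:ℝ) * m) * (((p:ℝ) * ((p:ℝ) - 1)) * (((k:ℝ) + 2) * ((k:ℝ) + 1)))) := by
    have := Nat.cast_le (α := ℝ).2 hnat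
    push_cast [hN1R, hp1R] at this
    linarith
  have hcore : (((k:ℝ)+2) ^ 2 / 12800) * ((n : ℝ) ^ 2 / (m : ℝ) ^ 2) * ((N : ℝ) * ((N : ℝ) - 1))
      ≤ ((p : ℝ) * ((p : ℝ) - 1) / 2) * (((k:ℝ) + 2) * ((k:ℝ) + 1)) := by
    rw [show (((k:ℝ)+2) ^ 2 / 12800) * ((n : ℝ) ^ 2 / (m : ℝ) ^ 2) * ((N : ℝ) * ((N : ℝ) - 1))
        = (((k:ℝ)+2) ^ 2 * (n : ℝ) ^ 2 * ((N : ℝ) * ((N : ℝ) - 1))) / (12800 * (m : ℝ) ^ 2) by ring]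
    rw [show ((p : ℝ) * ((p : ℝ) - 1) / 2) * (((k:ℝ) + 2) * ((k:ℝ) + 1))
        = ((p : ℝ) * ((p : ℝ) - 1) * (((k:ℝ) + 2) * ((k:ℝ) + 1))) / 2 by ring]
    rw [div_le_div_iff₀ (by positivity) (by norm_num)]
    ring_nf at hnatR ⊢
    linarith [hnatR]
  -- assemble
  have hCpos : (0 : ℝ) < ((N.choose (k + 2) : ℕ) : ℝ) := by
    exact_mod_cast Nat.choose_pos hcN
  rw [le_div_iff₀ hCpos]
  have hfacpos : (0 : ℝ) < ((k + 2).factorial : ℝ) := by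
    exact_mod_cast Nat.factorial_pos _
  rw [← mul_le_mul_iff_left₀ hfacpos]
  have hLnat : N.choose (k + 2) * (k + 2).factorial = N * (N - 1) * Bn := by
    rw [← hdesc, Nat.descFactorial_eq_factorial_mul_choose]; ring
  have hRnat : p.choose 2 * ((N - p).choose k) * (k + 2).factorial
      = p.choose 2 * (An * ((k + 2) * (k + 1))) := by
    have h1 : (k + 2).factorial = (k + 2) * ((k + 1) * k.factorial) := by
      rw [Nat.factorial_succ, Nat.factorial_succ]
    have h2 : (N - p).choose k * k.factorial = An := by
      rw [← hdescA, Nat.descFactorial_eq_factorial_mul_choose]; ring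
    rw [h1, ← h2]; ring
  have hL : (((k + 2 : ℕ) : ℝ) ^ 2 / 12800) * ((n : ℝ) ^ 2 / (m : ℝ) ^ 2)
        * (1 - 10 * α / ((k + 2 : ℕ) : ℝ)) ^ (k + 2) * ((N.choose (k + 2) : ℕ) : ℝ)
        * ((k + 2).factorial : ℝ)
      = (((k:ℝ)+2) ^ 2 / 12800) * ((n : ℝ) ^ 2 / (m : ℝ) ^ 2) * (1 - t) ^ (k + 2)
        * ((N * (N - 1) * Bn : ℕ) : ℝ) := by
    rw [hcast, htdef]
    rw [show (((k:ℝ)+2) ^ 2 / 12800) * ((n : ℝ) ^ 2 / (m : ℝ) ^ 2)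
        * (1 - 10 * α / ((k:ℝ)+2)) ^ (k + 2) * ((N.choose (k + 2) : ℕ) : ℝ)
        * ((k + 2).factorial : ℝ)
      = (((k:ℝ)+2) ^ 2 / 12800) * ((n : ℝ) ^ 2 / (m : ℝ) ^ 2)
        * (1 - 10 * α / ((k:ℝ)+2)) ^ (k + 2)
        * (((N.choose (k + 2) : ℕ) : ℝ) * ((k + 2).factorial : ℝ)) by ring]
    rw [show ((N.choose (k + 2) : ℕ) : ℝ) * ((k + 2).factorial : ℝ)
        = ((N.choose (k + 2) * (k + 2).factorial : ℕ) : ℝ) by push_cast; ring]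
    rw [hLnat]
  rw [hL]
  have hR : ((p.choose 2 * ((N - p).choose k) : ℕ) : ℝ) * ((k + 2).factorial : ℝ)
      = ((p.choose 2 * (An * ((k + 2) * (k + 1))) : ℕ) : ℝ) := by
    rw [show ((p.choose 2 * ((N - p).choose k) : ℕ) : ℝ) * ((k + 2).factorial : ℝ)
        = ((p.choose 2 * ((N - p).choose k) * (k + 2).factorial : ℕ) : ℝ) by push_cast; ring]
    rw [hRnat]
  rw [hR]
  -- final combination
  have h2' : (1 - t) ^ (k + 2) * (Bn : ℝ) ≤ (An : ℝ) :=
    le_trans (mul_le_mul_of_nonneg_right hpow (Nat.cast_nonneg _)) hprod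
  have hq0 : (0 : ℝ) ≤ (1 - t) ^ (k + 2) * (Bn : ℝ) :=
    mul_nonneg (pow_nonneg (by linarith) _) (Nat.cast_nonneg _)
  have hy0 : (0 : ℝ) ≤ ((p : ℝ) * ((p : ℝ) - 1) / 2) * (((k:ℝ) + 2) * ((k:ℝ) + 1)) := by
    have : (1 : ℝ) ≤ (p : ℝ) := by exact_mod_cast Nat.one_le_iff_ne_zero.2 (by omega)
    have h1 : (0:ℝ) ≤ (p : ℝ) * ((p : ℝ) - 1) / 2 := by
      apply div_nonneg _ (by norm_num)
      apply mul_nonneg (Nat.cast_nonneg _)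
      linarith
    apply mul_nonneg h1 (by positivity)
  calc (((k:ℝ)+2) ^ 2 / 12800) * ((n : ℝ) ^ 2 / (m : ℝ) ^ 2) * (1 - t) ^ (k + 2)
        * ((N * (N - 1) * Bn : ℕ) : ℝ)
      = ((((k:ℝ)+2) ^ 2 / 12800) * ((n : ℝ) ^ 2 / (m : ℝ) ^ 2) * ((N : ℝ) * ((N : ℝ) - 1)))
        * ((1 - t) ^ (k + 2) * (Bn : ℝ)) := by
        push_cast [hN1R]
        ring
    _ ≤ (((p : ℝ) * ((p : ℝ) - 1) / 2) * (((k:ℝ) + 2) * ((k:ℝ) + 1))) * (An : ℝ) :=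
        mul_le_mul hcore h2' hq0 hy0
    _ = ((p.choose 2 * (An * ((k + 2) * (k + 1))) : ℕ) : ℝ) := by
        push_cast [Nat.cast_choose_two]
        ring


/-- Let `α > 0` with `10α ≤ c`. Suppose `c ≥ 2`, `m ≥ n + c + 2`,
`n ≥ 20`, and `n ≤ 10αm/c − 1`. Then
`Pr[|I₁ ∩ B_New| ≥ 2] = Pr[|J₁ ∩ S_New| ≥ 2] ≥ (c²/12800)·(n²/m²)·(1 − 10α/c)^c`. -/
theorem pr_two_new_in_I1 (m n c : ℕ) (α : ℝ) (hα : 0 < α) (hαc : 10 * α ≤ (c : ℝ))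
    (hc : 2 ≤ c) (hm : n + c + 2 ≤ m) (hn20 : 20 ≤ n)
    (hn : (n : ℝ) ≤ 10 * α * (m : ℝ) / (c : ℝ) - 1) :
    prOf m n c ((validAssignments m n c).filter
        (fun π => 2 ≤ (I1 m n c ∩ labelSet m n c .BN π).card)) =
      prOf m n c ((validAssignments m n c).filter
        (fun π => 2 ≤ (J1 m n c ∩ labelSet m n c .SN π).card)) ∧
    ((c : ℝ) ^ 2 / 12800) * ((n : ℝ) ^ 2 / (m : ℝ) ^ 2) * (1 - 10 * α / (c : ℝ)) ^ c ≤
      prOf m n c ((validAssignments m n c).filter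
        (fun π => 2 ≤ (J1 m n c ∩ labelSet m n c .SN π).card)) := by
  classical
  have hpval : pVal n = (n + 9) / 10 := rfl
  have hNval : NN m n c = m + n + 2 * c := rfl
  have hp1 : 1 ≤ pVal n := by omega
  have hpn : pVal n ≤ NN m n c := by omega
  have hcN : c ≤ NN m n c := by omega
  constructor
  · unfold prOf
    rw [card_sym hp1]
  · obtain ⟨S₀, hS₀sub, hS₀⟩ : ∃ S₀ ⊆ (univ : Finset (Fin (NN m n c))), S₀.card = c :=
      Finset.exists_subset_card_eq (by
        rw [Finset.card_univ, Fintype.card_fin]; exact hcN)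
    have hF : 0 < (fib m n c S₀).card := fib_nonempty hS₀
    have hV : (validAssignments m n c).card = (NN m n c).choose c * (fib m n c S₀).card :=
      card_valid_eq hS₀
    have hE : ((validAssignments m n c).filter
        (fun π => 2 ≤ (J1 m n c ∩ labelSet m n c .SN π).card)).card
        = ((Finset.powersetCard c (univ : Finset (Fin (NN m n c)))).filter
            (fun S => 2 ≤ ((J1 m n c) ∩ S).card)).card * (fib m n c S₀).card :=
      card_filter_SN (fun S => 2 ≤ ((J1 m n c) ∩ S).card) hS₀
    have hG := good_count (m := m) (n := n) (c := c) hpn hc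
    unfold prOf
    rw [hE, hV]
    set F := (fib m n c S₀).card with hFdef
    set G := ((Finset.powersetCard c (univ : Finset (Fin (NN m n c)))).filter
        (fun S => 2 ≤ ((J1 m n c) ∩ S).card)).card with hGdef
    set C := (NN m n c).choose c with hCdef
    set D := (pVal n).choose 2 * ((NN m n c - pVal n).choose (c - 2)) with hDdef
    have hFne : ((F : ℝ)) ≠ 0 := by
      exact_mod_cast Nat.pos_iff_ne_zero.mp hF
    have hCpos : (0 : ℝ) < (C : ℝ) := by
      exact_mod_cast Nat.choose_pos hcN
    have hdiv : ((G * F : ℕ) : ℝ) / ((C * F : ℕ) : ℝ) = (G : ℝ) / (C : ℝ) := by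
      push_cast
      rw [mul_div_mul_right _ _ hFne]
    rw [hdiv]
    have hkey := key_real m n c α hα hαc hc hm hn20 hn
    refine le_trans hkey ?_
    have hDG : (D : ℝ) ≤ (G : ℝ) := by exact_mod_cast hG
    gcongr
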